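/- Suppose (v_n) is a real sequence and (w_n) another sequence such that |w_{n+1} − v_{n+1}| ≤ max(|w_n − v_n|, ..., |w_{n−N} − v_{n−N}|) + ε/(n+1)^{3/2} for all n ≥ M, with w_j = v_j for j = M−N,...,M. Then |w_n − v_n| ≤ ζ(3/2)·ε for all n ≥ M, where ζ(3/2) = Σ_{k≥1} k^{−3/2}. -/

import Mathlib

/-- If `|w_{n+1} - v_{n+1}| ≤ max_{0≤i≤N} |w_{n-i} - v_{n-i}| + ε/(n+1)^{3/2}` for `n ≥ M` and
`w_j = v_j` for `M - N ≤ j ≤ M`, then `|w_n - v_n| ≤ ζ(3/2) ε` for all `n ≥ M`. -/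
theorem cauchy_error_bound (N M : ℕ) (hMN : N < M) (ε : ℝ) (hε : 0 < ε)
    (v w : ℕ → ℝ)
    (hinit : ∀ j : ℕ, M - N ≤ j → j ≤ M → w j = v j)
    (hstep : ∀ n : ℕ, M ≤ n →
      |w (n + 1) - v (n + 1)| ≤
        (Finset.range (N + 1)).sup' (Finset.nonempty_range_add_one)
          (fun i => |w (n - i) - v (n - i)|) + ε / ((n : ℝ) + 1) ^ ((3 : ℝ) / 2)) :
    ∀ n : ℕ, M ≤ n → |w n - v n| ≤ (∑' k : ℕ, ((k : ℝ) + 1) ^ (-(3 : ℝ) / 2)) * ε := by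
  set f : ℕ → ℝ := fun k => ((k : ℝ) + 1) ^ (-(3 : ℝ) / 2) with hf
  have hf0 : ∀ k, 0 ≤ f k := fun k => Real.rpow_nonneg (by positivity) _
  have hsum : Summable f := by
    have h1 : Summable (fun k : ℕ => ((k : ℝ)) ^ (-(3 : ℝ) / 2)) :=
      Real.summable_nat_rpow.mpr (by norm_num)
    have h2 := (summable_nat_add_iff 1).mpr h1
    refine h2.congr fun k => ?_
    push_cast
    ring_nf
    rw [hf, add_comm]
  -- key: partial-sum bound by strong induction
  have key : ∀ n : ℕ, ∀ m : ℕ, m ≤ n → M ≤ m →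
      |w m - v m| ≤ ε * ∑ k ∈ Finset.Ico M m, f k := by
    intro n
    induction n with
    | zero =>
      intro m hm hMm
      omega
    | succ n ih =>
      intro m hm hMm
      rcases Nat.lt_succ_iff_lt_or_eq.mp (Nat.lt_succ_iff.mpr hm) with h | heq
      · exact ih m (Nat.lt_succ_iff.mp h) hMm
      · subst heq
        by_cases hn : M ≤ n
        · have hstep' := hstep n hn
          have hsup : (Finset.range (N + 1)).sup' Finset.nonempty_range_add_one
              (fun i => |w (n - i) - v (n - i)|) ≤ ε * ∑ k ∈ Finset.Ico M n, f k := by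
            apply Finset.sup'_le
            intro i hi
            have hiN : i ≤ N := Nat.lt_succ_iff.mp (Finset.mem_range.mp hi)
            by_cases hni : M ≤ n - i
            · calc |w (n - i) - v (n - i)| ≤ ε * ∑ k ∈ Finset.Ico M (n - i), f k :=
                    ih (n - i) (Nat.sub_le n i) hni
                _ ≤ ε * ∑ k ∈ Finset.Ico M n, f k := by
                    apply mul_le_mul_of_nonneg_left _ hε.le
                    apply Finset.sum_le_sum_of_subset_of_nonneg
                    · exact Finset.Ico_subset_Ico le_rfl (Nat.sub_le n i)
                    · intro k _ _; exact hf0 k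
            · have h1 : M - N ≤ n - i := by omega
              have h2 : n - i ≤ M := by omega
              rw [hinit (n - i) h1 h2]
              simp only [sub_self, abs_zero]
              exact mul_nonneg hε.le (Finset.sum_nonneg fun k _ => hf0 k)
          have heps : ε / ((n : ℝ) + 1) ^ ((3 : ℝ) / 2) = ε * f n := by
            simp only [hf]
            rw [show (-(3 : ℝ) / 2) = -((3 : ℝ) / 2) by ring,
              Real.rpow_neg (by positivity)]
            ring
          calc |w (n + 1) - v (n + 1)| ≤ _ + ε / ((n : ℝ) + 1) ^ ((3 : ℝ) / 2) := hstep'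
            _ ≤ ε * ∑ k ∈ Finset.Ico M n, f k + ε * f n := by
                rw [heps]; exact add_le_add_left hsup _
            _ = ε * ∑ k ∈ Finset.Ico M (n + 1), f k := by
                rw [Finset.sum_Ico_succ_top hn]; ring
        · have hne : n + 1 = M := by omega
          rw [hne, hinit M (by omega) le_rfl]
          simp
  intro n hn
  calc |w n - v n| ≤ ε * ∑ k ∈ Finset.Ico M n, f k := key n n le_rfl hn
    _ ≤ ε * ∑' k, f k := by
        apply mul_le_mul_of_nonneg_left _ hε.le
        exact Summable.sum_le_tsum _ (fun k _ => hf0 k) hsum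
    _ = (∑' k : ℕ, ((k : ℝ) + 1) ^ (-(3 : ℝ) / 2)) * ε := by rw [mul_comm]
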